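/- Let $E$ be a complex Banach space and $f$ a bounded holomorphic function on the open unit ball $B_E$ with $\sup_{x \in B_E}|f(x)| \leq 1$. Then for every $x_0 \in B_E$, $(1-\|x_0\|)\|f'(x_0)\| \leq 1 - |f(x_0)|^2$, where $f'(x_0) \in E^*$ is the Fréchet derivative and $\|f'(x_0)\|$ its operator norm. -/

import Mathlib

open Metric Set
open Complex

lemma mobius_denom_ne {a w : ℂ} (ha : ‖a‖ < 1) (hw : ‖w‖ < 1) :
    (1 : ℂ) - (starRingEnd ℂ) a * w ≠ 0 := by
  intro h
  rw [sub_eq_zero] at h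
  have h1 : ‖(starRingEnd ℂ) a * w‖ < 1 := by
    rw [norm_mul, RCLike.norm_conj]
    calc ‖a‖ * ‖w‖ ≤ 1 * ‖w‖ := by gcongr
    _ < 1 := by simpa
  rw [← h] at h1
  simp at h1

lemma mobius_lt_one {a w : ℂ} (ha : ‖a‖ < 1) (hw : ‖w‖ < 1) :
    ‖(w - a) / (1 - (starRingEnd ℂ) a * w)‖ < 1 := by
  have hd := mobius_denom_ne ha hw
  rw [norm_div, div_lt_one (norm_pos_iff.mpr hd)]
  have ha' : a.re ^ 2 + a.im ^ 2 < 1 := by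
    have := Complex.sq_norm a
    rw [normSq_apply] at this
    nlinarith [norm_nonneg a, ha]
  have hw' : w.re ^ 2 + w.im ^ 2 < 1 := by
    have := Complex.sq_norm w
    rw [normSq_apply] at this
    nlinarith [norm_nonneg w, hw]
  have key : normSq (w - a) < normSq (1 - (starRingEnd ℂ) a * w) := by
    simp only [normSq_apply, sub_re, sub_im, mul_re, mul_im, conj_re, conj_im, one_re, one_im]
    nlinarith [mul_pos (sub_pos.2 ha') (sub_pos.2 hw')]
  have e1 : ‖w - a‖ ^ 2 = normSq (w - a) := by rw [Complex.sq_norm]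
  have e2 : ‖1 - (starRingEnd ℂ) a * w‖ ^ 2 = normSq (1 - (starRingEnd ℂ) a * w) := by
    rw [Complex.sq_norm]
  nlinarith [norm_nonneg (w - a), norm_nonneg (1 - (starRingEnd ℂ) a * w)]

lemma pick_disc {g : ℂ → ℂ} {r : ℝ} (hr : 0 < r)
    (hd : DifferentiableOn ℂ g (ball 0 r))
    (hb : ∀ z ∈ ball (0 : ℂ) r, ‖g z‖ < 1) :
    ‖deriv g 0‖ ≤ (1 - ‖g 0‖ ^ 2) / r := by
  have h0 : (0 : ℂ) ∈ ball (0 : ℂ) r := by simpa using hr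
  set a := g 0 with ha_def
  have ha : ‖a‖ < 1 := hb 0 h0
  set h : ℂ → ℂ := fun z => (g z - a) / (1 - (starRingEnd ℂ) a * g z) with hh
  have hden : ∀ z ∈ ball (0 : ℂ) r, (1 : ℂ) - (starRingEnd ℂ) a * g z ≠ 0 :=
    fun z hz => mobius_denom_ne ha (hb z hz)
  have hdh : DifferentiableOn ℂ h (ball 0 r) := by
    apply DifferentiableOn.div
    · exact hd.sub (differentiableOn_const a)
    · exact (differentiableOn_const 1).sub ((differentiableOn_const _).mul hd)
    · exact hden
  have h00 : h 0 = 0 := by simp [hh, ← ha_def]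
  have hmaps : MapsTo h (ball (0 : ℂ) r) (ball (h 0) 1) := by
    intro z hz
    rw [h00, mem_ball_zero_iff]
    exact mobius_lt_one ha (hb z hz)
  have hschwarz : ‖deriv h 0‖ ≤ 1 / r :=
    Complex.norm_deriv_le_div_of_mapsTo_ball hdh (hmaps.mono_right ball_subset_closedBall) hr
  have hg0 : DifferentiableAt ℂ g 0 := hd.differentiableAt (isOpen_ball.mem_nhds h0)
  have hda : DifferentiableAt ℂ (fun z => g z - a) 0 := hg0.sub_const a
  have hdb : DifferentiableAt ℂ (fun z => (1 : ℂ) - (starRingEnd ℂ) a * g z) 0 :=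
    (differentiableAt_const _).sub ((differentiableAt_const _).mul hg0)
  have hderiv : deriv h 0 = deriv g 0 / (1 - (starRingEnd ℂ) a * a) := by
    rw [hh]
    rw [deriv_fun_div hda hdb (hden 0 h0)]
    have e1 : deriv (fun z => g z - a) 0 = deriv g 0 := by
      simp [deriv_sub_const]
    have e2 : deriv (fun z => (1 : ℂ) - (starRingEnd ℂ) a * g z) 0
        = -((starRingEnd ℂ) a * deriv g 0) := by
      rw [deriv_const_sub]
      simp [deriv_const_mul _ hg0]
    rw [e1, e2, ← ha_def]
    field_simp [show (1 : ℂ) - (starRingEnd ℂ) a * a ≠ 0 from hden 0 h0]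
    ring
  have hreal : (1 : ℂ) - (starRingEnd ℂ) a * a = ((1 - ‖a‖ ^ 2 : ℝ) : ℂ) := by
    have : (starRingEnd ℂ) a * a = (normSq a : ℂ) := by
      rw [mul_comm]; exact Complex.mul_conj a
    rw [this]
    push_cast
    rw [Complex.normSq_eq_norm_sq]
    push_cast
    ring
  have hnorm : ‖deriv h 0‖ = ‖deriv g 0‖ / (1 - ‖a‖ ^ 2) := by
    rw [hderiv, norm_div, hreal, Complex.norm_real, Real.norm_eq_abs, abs_of_pos (by nlinarith [norm_nonneg a])]
  have hpos : (0 : ℝ) < 1 - ‖a‖ ^ 2 := by nlinarith [norm_nonneg a]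
  rw [hnorm, div_le_div_iff₀ hpos hr] at hschwarz
  rw [le_div_iff₀ hr]
  linarith

/-- Schwarz–Pick type estimate on the unit ball of a complex Banach space: if
`f` is holomorphic on `B_E` with `|f| ≤ 1`, then
`(1 - ‖x₀‖) ‖f'(x₀)‖ ≤ 1 - |f(x₀)|²` for every `x₀ ∈ B_E`. -/
theorem schwarz_pick_ball {E : Type*} [NormedAddCommGroup E] [NormedSpace ℂ E] [CompleteSpace E]
    (f : E → ℂ)
    (hf : DifferentiableOn ℂ f (ball (0 : E) 1))
    (hb : ∀ x ∈ ball (0 : E) 1, ‖f x‖ ≤ 1) :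
    ∀ x₀ ∈ ball (0 : E) 1,
      (1 - ‖x₀‖) * ‖fderiv ℂ f x₀‖ ≤ 1 - ‖f x₀‖ ^ 2 := by
  intro x₀ hx₀
  rw [mem_ball_zero_iff] at hx₀
  set r : ℝ := 1 - ‖x₀‖ with hr_def
  have hr : 0 < r := by simp [hr_def]; linarith
  have hfx : ‖f x₀‖ ≤ 1 := hb x₀ (mem_ball_zero_iff.mpr hx₀)
  -- enough to bound ‖fderiv ℂ f x₀ v‖ for each unit-norm-bounded v
  have key : ∀ v : E, ‖v‖ ≤ 1 → ‖fderiv ℂ f x₀ v‖ ≤ (1 - ‖f x₀‖ ^ 2) / r := by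
    intro v hv
    -- the curve z ↦ x₀ + z • v
    have hmem : ∀ z ∈ ball (0 : ℂ) r, x₀ + z • v ∈ ball (0 : E) 1 := by
      intro z hz
      rw [mem_ball_zero_iff] at hz ⊢
      calc ‖x₀ + z • v‖ ≤ ‖x₀‖ + ‖z • v‖ := norm_add_le _ _
        _ ≤ ‖x₀‖ + ‖z‖ * 1 := by rw [norm_smul]; gcongr
        _ < ‖x₀‖ + r := by linarith [hz]
        _ = 1 := by rw [hr_def]; ring
    -- epsilon-of-room: scale f by c ∈ (0,1)
    have hc : ∀ c : ℝ, 0 < c → c < 1 →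
        c * ‖fderiv ℂ f x₀ v‖ ≤ (1 - c ^ 2 * ‖f x₀‖ ^ 2) / r := by
      intro c hc0 hc1
      set g : ℂ → ℂ := fun z => (c : ℂ) * f (x₀ + z • v) with hg
      have hdg : DifferentiableOn ℂ g (ball 0 r) := by
        apply DifferentiableOn.const_mul
        intro z hz
        have h1 : DifferentiableAt ℂ (fun z : ℂ => x₀ + z • v) z :=
          (differentiableAt_const _).add (differentiableAt_id.smul_const v)
        have h2 : DifferentiableAt ℂ f (x₀ + z • v) :=
          hf.differentiableAt (isOpen_ball.mem_nhds (hmem z hz))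
        exact (h2.comp z h1).differentiableWithinAt
      have hbg : ∀ z ∈ ball (0 : ℂ) r, ‖g z‖ < 1 := by
        intro z hz
        show ‖(c : ℂ) * f (x₀ + z • v)‖ < 1
        calc ‖(c : ℂ) * f (x₀ + z • v)‖ = c * ‖f (x₀ + z • v)‖ := by
              rw [norm_mul, Complex.norm_real, Real.norm_eq_abs, abs_of_pos hc0]
          _ ≤ c * 1 := by gcongr; exact hb _ (hmem z hz)
          _ < 1 := by linarith
      have hg0 : g 0 = (c : ℂ) * f x₀ := by simp [hg]
      have hderivg : deriv g 0 = (c : ℂ) * fderiv ℂ f x₀ v := by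
        have hL : HasDerivAt (fun z : ℂ => x₀ + z • v) v 0 := by
          simpa using ((hasDerivAt_id (0 : ℂ)).smul_const v).const_add x₀
        have hF : HasFDerivAt f (fderiv ℂ f x₀) x₀ := by
          have := hf.differentiableAt (isOpen_ball.mem_nhds (mem_ball_zero_iff.mpr hx₀))
          exact this.hasFDerivAt
        have hF' : HasFDerivAt f (fderiv ℂ f x₀) (x₀ + (0 : ℂ) • v) := by simpa using hF
        have hcomp : HasDerivAt (fun z : ℂ => f (x₀ + z • v)) (fderiv ℂ f x₀ v) 0 := by
          have := hF'.comp_hasDerivAt 0 hL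
          exact this
        have := hcomp.const_mul (c : ℂ)
        exact this.deriv
      have := pick_disc hr hdg hbg
      rw [hderivg, hg0] at this
      simp only [norm_mul, Complex.norm_real, Real.norm_eq_abs, abs_of_pos hc0] at this
      calc c * ‖fderiv ℂ f x₀ v‖ ≤ (1 - (c * ‖f x₀‖) ^ 2) / r := this
        _ = (1 - c ^ 2 * ‖f x₀‖ ^ 2) / r := by ring
    -- take c → 1⁻
    have hlim : Filter.Tendsto (fun c : ℝ => (1 - c ^ 2 * ‖f x₀‖ ^ 2) / r)
        (nhdsWithin 1 (Set.Iio 1)) (nhds ((1 - ‖f x₀‖ ^ 2) / r)) := by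
      have : Filter.Tendsto (fun c : ℝ => (1 - c ^ 2 * ‖f x₀‖ ^ 2) / r)
          (nhds 1) (nhds ((1 - 1 ^ 2 * ‖f x₀‖ ^ 2) / r)) := by
        apply Filter.Tendsto.div_const
        exact (tendsto_const_nhds.sub (((continuous_pow 2).tendsto 1).mul_const _))
      simpa using this.mono_left nhdsWithin_le_nhds
    have hlim2 : Filter.Tendsto (fun c : ℝ => c * ‖fderiv ℂ f x₀ v‖)
        (nhdsWithin 1 (Set.Iio 1)) (nhds (1 * ‖fderiv ℂ f x₀ v‖)) :=
      (continuous_id.mul continuous_const).continuousAt.tendsto.mono_left nhdsWithin_le_nhds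
    have := le_of_tendsto_of_tendsto hlim2 hlim ?_
    · simpa using this
    · filter_upwards [self_mem_nhdsWithin,
        Ioo_mem_nhdsLT_of_mem (by norm_num : (1:ℝ) ∈ Set.Ioc 0 1)] with c hc1 hc0
      exact hc c hc0.1 hc1
  -- conclude via operator norm
  have hop : ‖fderiv ℂ f x₀‖ ≤ (1 - ‖f x₀‖ ^ 2) / r := by
    have hnum : (0 : ℝ) ≤ 1 - ‖f x₀‖ ^ 2 := by nlinarith [norm_nonneg (f x₀)]
    apply ContinuousLinearMap.opNorm_le_bound _ (div_nonneg hnum hr.le)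
    intro v
    rcases eq_or_ne v 0 with rfl | hv
    · simp
    · have hvpos : 0 < ‖v‖ := norm_pos_iff.mpr hv
      have h1 : ‖(‖v‖⁻¹ : ℂ) • v‖ ≤ 1 := by
        rw [norm_smul, norm_inv, Complex.norm_real, Real.norm_eq_abs,
          abs_of_pos hvpos, inv_mul_cancel₀ hvpos.ne']
      have := key _ h1
      rw [map_smul, norm_smul, norm_inv, Complex.norm_real, Real.norm_eq_abs,
        abs_of_pos hvpos] at this
      calc ‖fderiv ℂ f x₀ v‖ = ‖v‖ * (‖v‖⁻¹ * ‖fderiv ℂ f x₀ v‖) := by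
            field_simp
        _ ≤ ‖v‖ * ((1 - ‖f x₀‖ ^ 2) / r) := mul_le_mul_of_nonneg_left this (norm_nonneg v)
        _ = (1 - ‖f x₀‖ ^ 2) / r * ‖v‖ := by ring
  calc r * ‖fderiv ℂ f x₀‖ ≤ r * ((1 - ‖f x₀‖ ^ 2) / r) := by gcongr
    _ = 1 - ‖f x₀‖ ^ 2 := by field_simp
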